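/- For any q > 0 and any finite nonempty type X, the Tsallis entropy S_q(P) is maximized over probability distributions P on X exactly at the uniform distribution, and the maximum value is -ln_q(1/|X|). -/

import Mathlib

open Real Finset

noncomputable def qlog (q x : ℝ) : ℝ :=
  if q = 1 then Real.log x else (x ^ (q - 1) - 1) / (q - 1)

noncomputable def qexp (q x : ℝ) : ℝ :=
  if q = 1 then Real.exp x else (max (1 + (q - 1) * x) 0) ^ (1 / (q - 1))

/-- The summand `-p · ln_q p` with the convention `0 · ln_q 0 = 0`. -/
noncomputable def entTerm (q p : ℝ) : ℝ := if p = 0 then 0 else -p * qlog q p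

def IsPmf {X : Type*} [Fintype X] (P : X → ℝ) : Prop :=
  (∀ x, 0 ≤ P x) ∧ ∑ x, P x = 1

/-- Tsallis entropy. -/
noncomputable def Sq {X : Type*} [Fintype X] (q : ℝ) (P : X → ℝ) : ℝ :=
  ∑ x, entTerm q (P x)

/-- The q-maximum operator. -/
noncomputable def qmax {X : Type*} [Fintype X] (q : ℝ) (f : X → ℝ) : ℝ :=
  sSup {y | ∃ P : X → ℝ, IsPmf P ∧ y = (∑ x, P x * f x) + Sq q P}

lemma entTerm_one (p : ℝ) : entTerm 1 p = -(p * Real.log p) := by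
  unfold entTerm qlog
  by_cases hp : p = 0 <;> simp [hp]

lemma entTerm_ne (q : ℝ) (hq : 0 < q) (hq1 : q ≠ 1) (p : ℝ) (hp : 0 ≤ p) :
    entTerm q p = (p - p ^ q) / (q - 1) := by
  unfold entTerm qlog
  rcases eq_or_lt_of_le hp with rfl | hp'
  · simp [Real.zero_rpow hq.ne']
  · have hpq : p ^ q = p * p ^ (q - 1) := by
      nth_rewrite 2 [← Real.rpow_one p]
      rw [← Real.rpow_add hp']; ring_nf
    simp only [hp'.ne', if_false, hq1, if_neg]
    rw [hpq]; ring

/-- slope of the tangent line of `entTerm q` at `u`. -/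
noncomputable def tslope (q u : ℝ) : ℝ :=
  if q = 1 then -(Real.log u + 1) else (1 - q * u ^ (q - 1)) / (q - 1)

lemma tangent_lt {q u p : ℝ} (hq : 0 < q) (hu : 0 < u) (hp : 0 ≤ p) (hne : p ≠ u) :
    entTerm q p < entTerm q u + tslope q u * (p - u) := by
  by_cases hq1 : q = 1
  · subst hq1
    rw [entTerm_one, entTerm_one]
    simp only [tslope, if_pos rfl, if_true]
    have key : p * (Real.log u - Real.log p) < u - p := by
      rcases eq_or_lt_of_le hp with rfl | hp'
      · simpa using hu
      · have hdu : 0 < u / p := div_pos hu hp'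
        have hdne : u / p ≠ 1 := by
          intro h
          exact hne ((div_eq_one_iff_eq hp'.ne').mp h).symm
        have h := Real.log_lt_sub_one_of_pos hdu hdne
        rw [Real.log_div hu.ne' hp'.ne'] at h
        have h2 := mul_lt_mul_of_pos_left h hp'
        have h3 : p * (u / p - 1) = u - p := by field_simp
        linarith [h2, h3.le, h3.ge]
    nlinarith [key]
  · rw [entTerm_ne q hq hq1 p hp, entTerm_ne q hq hq1 u hu.le]
    simp only [tslope, if_neg hq1]
    -- Bernoulli setup
    have hs : -1 ≤ p / u - 1 := by
      have : 0 ≤ p / u := div_nonneg hp hu.le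
      linarith
    have hs' : p / u - 1 ≠ 0 := by
      intro h
      have : p / u = 1 := by linarith
      exact hne ((div_eq_one_iff_eq hu.ne').mp this)
    have hone : (1 : ℝ) + (p / u - 1) = p / u := by ring
    have hupos : 0 < u ^ q := Real.rpow_pos_of_pos hu q
    have hdiv : (p / u) ^ q = p ^ q / u ^ q := Real.div_rpow hp hu.le q
    have huq1 : u ^ (q - 1) = u ^ q / u := by
      rw [Real.rpow_sub hu, Real.rpow_one]
    have hexp : u ^ q * (1 + q * (p / u - 1)) = u ^ q + q * (u ^ q / u) * (p - u) := by
      field_simp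
    have hcan : u ^ q * (p ^ q / u ^ q) = p ^ q := by
      field_simp
    rw [div_mul_eq_mul_div, ← add_div]
    rcases lt_or_gt_of_ne hq1 with hlt | hgt
    · -- q < 1 : concave, reversed Bernoulli
      have B := rpow_one_add_lt_one_add_mul_self hs hs' hq hlt
      rw [hone, hdiv] at B
      have B2 := mul_lt_mul_of_pos_left B hupos
      rw [hcan, hexp] at B2
      -- p ^ q < u ^ q + q * u^(q-1) * (p - u)
      rw [div_lt_div_right_of_neg (by linarith : q - 1 < 0)]
      rw [huq1]
      nlinarith [B2]
    · -- q > 1 : convex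
      have B := one_add_mul_self_lt_rpow_one_add hs hs' hgt
      rw [hone, hdiv] at B
      have B2 := mul_lt_mul_of_pos_left B hupos
      rw [hcan, hexp] at B2
      rw [div_lt_div_iff_of_pos_right (by linarith : 0 < q - 1)]
      rw [huq1]
      nlinarith [B2]

lemma tangent_le {q u p : ℝ} (hq : 0 < q) (hu : 0 < u) (hp : 0 ≤ p) :
    entTerm q p ≤ entTerm q u + tslope q u * (p - u) := by
  rcases eq_or_ne p u with rfl | hne
  · simp
  · exact (tangent_lt hq hu hp hne).le

theorem stmt4 {X : Type*} [Fintype X] [Nonempty X] (q : ℝ) (hq : 0 < q) :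
    Sq q (fun _ : X => 1 / (Fintype.card X : ℝ)) = -qlog q (1 / (Fintype.card X : ℝ)) ∧
    ∀ P : X → ℝ, IsPmf P →
      Sq q P ≤ -qlog q (1 / (Fintype.card X : ℝ)) ∧
      (Sq q P = -qlog q (1 / (Fintype.card X : ℝ)) →
        P = fun _ => 1 / (Fintype.card X : ℝ)) := by
  have hn : 0 < (Fintype.card X : ℝ) := by
    exact_mod_cast Fintype.card_pos
  set n : ℝ := (Fintype.card X : ℝ) with hndef
  set u : ℝ := 1 / n with hudef
  have hu : 0 < u := by positivity
  have hnu : n * u = 1 := by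
    rw [hudef]; field_simp
  have h1 : Sq q (fun _ : X => u) = -qlog q u := by
    simp only [Sq, entTerm, if_neg hu.ne', Finset.sum_const, card_univ, nsmul_eq_mul]
    have : (Fintype.card X : ℝ) * (-u * qlog q u) = -(n * u) * qlog q u := by
      rw [hndef]; ring
    rw [this, hnu]; ring
  have hsum : ∀ P : X → ℝ, IsPmf P →
      ∑ x, (entTerm q u + tslope q u * (P x - u)) = -qlog q u := by
    intro P hP
    rw [Finset.sum_add_distrib, Finset.sum_const, card_univ, nsmul_eq_mul,
      ← Finset.mul_sum, Finset.sum_sub_distrib, hP.2, Finset.sum_const, card_univ,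
      nsmul_eq_mul]
    have h2 : (Fintype.card X : ℝ) * u = 1 := by rw [← hndef]; exact hnu
    rw [h2, sub_self, mul_zero, add_zero]
    have h3 : entTerm q u = -u * qlog q u := by
      simp [entTerm, if_neg hu.ne']
    rw [h3, ← hndef]
    calc n * (-u * qlog q u) = -(n * u) * qlog q u := by ring
      _ = -qlog q u := by rw [hnu]; ring
  refine ⟨h1, fun P hP => ?_⟩
  have hle : Sq q P ≤ -qlog q u := by
    rw [← hsum P hP]
    exact Finset.sum_le_sum fun x _ => tangent_le hq hu (hP.1 x)
  refine ⟨hle, fun heq => ?_⟩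
  have hzero : ∑ x, ((entTerm q u + tslope q u * (P x - u)) - entTerm q (P x)) = 0 := by
    rw [Finset.sum_sub_distrib, hsum P hP, ← Sq, heq, sub_self]
  have hall := (Finset.sum_eq_zero_iff_of_nonneg
    (fun x _ => sub_nonneg.mpr (tangent_le hq hu (hP.1 x)))).mp hzero
  funext x
  by_contra hne
  have := tangent_lt hq hu (hP.1 x) hne
  have h0 := hall x (Finset.mem_univ x)
  simp only [sub_eq_zero] at h0
  linarith [h0.ge, h0.le]
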